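/- Fix b with 0 < b < 1. Let B be the 4×4 complex matrix with B_{12} = B_{23} = B_{33} = 1 and all other entries 0, and let Λ = (√((1−b)/(2b)), 0, 0, √((1+b)/(2b)))ᵀ and Λ̃ = (√((1+b)/(2b)), 0, 0, √((1−b)/(2b)))ᵀ ∈ ℂ⁴ (the data of Horodecki's 2×4 state ρ_97). Then there is no complex number s satisfying (B − s I₄) Λ̃ = (B† − conj(s) I₄) Λ; consequently the 5×5 matrix [[B, Λ],[Λ̃†, s]] is not normal for any s ∈ ℂ. -/

import Mathlib

open Matrix BigOperators ComplexConjugate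
open scoped ComplexOrder

noncomputable section

/-- A square complex matrix is normal if it commutes with its conjugate transpose. -/
def Matrix.IsNormal {n : Type*} [Fintype n] (A : Matrix n n ℂ) : Prop :=
  A * Aᴴ = Aᴴ * A

/-- For the data (B, Λ, Λ̃) of Horodecki's 2×4 state ρ_97 with 0 < b < 1, there
is no s ∈ ℂ with (B − s)Λ̃ = (B† − s̄)Λ; consequently the 5×5 block matrix
[[B, Λ],[Λ̃†, s]] is not normal for any s ∈ ℂ. -/
theorem horodecki97_no_normal_extension (b : ℝ) (hb0 : 0 < b) (hb1 : b < 1)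
    (B : Matrix (Fin 4) (Fin 4) ℂ)
    (hB : B = Matrix.of fun i j =>
      if (i = 0 ∧ j = 1) ∨ (i = 1 ∧ j = 2) ∨ (i = 2 ∧ j = 2) then 1 else 0)
    (Λ Λt : Fin 4 → ℂ)
    (hΛ : Λ = ![(Real.sqrt ((1 - b) / (2 * b)) : ℂ), 0, 0,
      (Real.sqrt ((1 + b) / (2 * b)) : ℂ)])
    (hΛt : Λt = ![(Real.sqrt ((1 + b) / (2 * b)) : ℂ), 0, 0,
      (Real.sqrt ((1 - b) / (2 * b)) : ℂ)]) :
    (¬ ∃ s : ℂ, (B - s • (1 : Matrix (Fin 4) (Fin 4) ℂ)).mulVec Λt =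
        (Bᴴ - (conj s) • (1 : Matrix (Fin 4) (Fin 4) ℂ)).mulVec Λ) ∧
    (∀ s : ℂ, ¬ (Matrix.fromBlocks B
        (Matrix.of fun j (_ : Fin 1) => Λ j)
        (Matrix.of fun (_ : Fin 1) j => conj (Λt j))
        (Matrix.of fun (_ : Fin 1) (_ : Fin 1) => s)).IsNormal) := by
  subst hB hΛ hΛt
  have hapos : (0:ℝ) < Real.sqrt ((1 - b) / (2 * b)) :=
    Real.sqrt_pos.mpr (div_pos (by linarith) (by linarith))
  have haC : (Real.sqrt ((1 - b) / (2 * b)) : ℂ) ≠ 0 := by exact_mod_cast hapos.ne'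
  constructor
  · rintro ⟨s, h⟩
    have h1 := congrFun h 1
    simp [mulVec, dotProduct, Fin.sum_univ_four, conjTranspose, Matrix.one_apply,
      ] at h1
    exact haC h1.symm
  · intro s hn
    have h1 := congrFun (congrFun hn (Sum.inl 1)) (Sum.inr 0)
    simp [mul_apply, Fintype.sum_sum_type, Fin.sum_univ_four, fromBlocks,
      conjTranspose] at h1
    exact haC h1.symm
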